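/- Consider the GRCD method x^{k+1} = x^k + (‖S_kᵀ Aᵀ r^k‖₂²/‖A S_k S_kᵀ Aᵀ r^k‖₂²) S_k S_kᵀ Aᵀ r^k applied to min ‖Ax − b‖₂², where r^k = b − Ax^k and S_k ∼ 𝒟 with 𝔼[S Sᵀ] positive definite. Then 𝔼[‖x^{k+1} − x*‖²_{AᵀA} | x^k] ≤ (1 − σ²_min(AM^{1/2})) ‖x^k − x*‖²_{AᵀA}, where M = 𝔼[SSᵀ/‖AS‖₂²] and x* is any least-squares solution. -/

import Mathlib

open Matrix

/-- The positive semidefinite square root of a positive semidefinite matrix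
(the definition `Matrix.PosSemidef.sqrt` of the older Mathlib, removed since). -/
noncomputable def Matrix.PosSemidef.sqrt {n : Type*} [Fintype n] [DecidableEq n]
    {A : Matrix n n ℝ} (hA : A.PosSemidef) : Matrix n n ℝ :=
  hA.1.eigenvectorUnitary.1 * diagonal ((↑) ∘ (√·) ∘ hA.1.eigenvalues) *
  (star hA.1.eigenvectorUnitary : Matrix n n ℝ)

/-- Squared spectral (ℓ2 operator) norm of a real matrix. -/
noncomputable def opNormSq {a b : ℕ} (B : Matrix (Fin a) (Fin b) ℝ) : ℝ :=
  sSup {t : ℝ | ∃ v : Fin b → ℝ, v ⬝ᵥ v = 1 ∧ t = B.mulVec v ⬝ᵥ B.mulVec v}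

/-- Squared smallest nonzero singular value of a real matrix. -/
noncomputable def sigmaMinSq {a b : ℕ} (B : Matrix (Fin a) (Fin b) ℝ) : ℝ :=
  sInf {t : ℝ | ∃ v : Fin b → ℝ, (∃ u : Fin a → ℝ, Bᵀ.mulVec u = v) ∧
    v ⬝ᵥ v = 1 ∧ t = B.mulVec v ⬝ᵥ B.mulVec v}

lemma dp_self_nonneg {a : ℕ} (v : Fin a → ℝ) : 0 ≤ v ⬝ᵥ v :=
  Finset.sum_nonneg fun i _ => mul_self_nonneg _

lemma dp_sum {k : ℕ} {ι : Type*} [Fintype ι] (v : Fin k → ℝ) (F : ι → (Fin k → ℝ)) :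
    v ⬝ᵥ (∑ i, F i) = ∑ i, v ⬝ᵥ F i :=
  map_sum (AddMonoidHom.mk' (fun x => v ⬝ᵥ x) (fun a b => dotProduct_add v a b)) F Finset.univ

lemma sum_mulVec' {k l : ℕ} {ι : Type*} [Fintype ι] (F : ι → Matrix (Fin k) (Fin l) ℝ)
    (g : Fin l → ℝ) : (∑ i, F i).mulVec g = ∑ i, (F i).mulVec g :=
  map_sum (AddMonoidHom.mk' (fun M : Matrix (Fin k) (Fin l) ℝ => M.mulVec g)
    (fun X Y => add_mulVec X Y g)) F Finset.univ

lemma opNormSq_nonneg' {a b : ℕ} (B : Matrix (Fin a) (Fin b) ℝ) : 0 ≤ opNormSq B :=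
  Real.sSup_nonneg (by rintro t ⟨v, _, rfl⟩; exact dp_self_nonneg _)

lemma quad_SST {d q : ℕ} (S : Matrix (Fin d) (Fin q) ℝ) (g : Fin d → ℝ) :
    g ⬝ᵥ (S * Sᵀ).mulVec g = Sᵀ.mulVec g ⬝ᵥ Sᵀ.mulVec g := by
  rw [← mulVec_mulVec, dotProduct_mulVec, ← mulVec_transpose]

lemma herm_transpose {k : ℕ} {M : Matrix (Fin k) (Fin k) ℝ} (h : M.IsHermitian) : Mᵀ = M := by
  ext i j
  simpa [conjTranspose_apply] using congrFun (congrFun h i) j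

section opn

lemma opNormSq_bddAbove {a b : ℕ} (B : Matrix (Fin a) (Fin b) ℝ) :
    BddAbove {t : ℝ | ∃ v : Fin b → ℝ, v ⬝ᵥ v = 1 ∧ t = B.mulVec v ⬝ᵥ B.mulVec v} := by
  refine ⟨∑ i, ∑ j, (B i j)^2, ?_⟩
  rintro t ⟨v, hv, rfl⟩
  have h1 : ∀ i, (B.mulVec v i)^2 ≤ (∑ j, (B i j)^2) := by
    intro i
    have h2 := Finset.sum_mul_sq_le_sq_mul_sq Finset.univ (fun j => B i j) v
    have hv2 : ∑ j, v j ^ 2 = 1 := by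
      rw [← hv]; simp [dotProduct, sq]
    rw [hv2, mul_one] at h2
    simpa [mulVec, dotProduct] using h2
  calc B.mulVec v ⬝ᵥ B.mulVec v = ∑ i, (B.mulVec v i)^2 := by simp [dotProduct, sq]
    _ ≤ ∑ i, ∑ j, (B i j)^2 := Finset.sum_le_sum fun i _ => h1 i

/-- key bound: ‖Bw‖² ≤ opNormSq B * ‖w‖². -/
lemma mulVec_dp_le {a b : ℕ} (B : Matrix (Fin a) (Fin b) ℝ) (w : Fin b → ℝ) :
    B.mulVec w ⬝ᵥ B.mulVec w ≤ opNormSq B * (w ⬝ᵥ w) := by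
  rcases eq_or_ne w 0 with rfl | hw
  · simp
  · have hww : 0 < w ⬝ᵥ w := lt_of_le_of_ne (dp_self_nonneg w) (by
      intro h; exact hw ((dotProduct_self_eq_zero).mp h.symm))
    set c : ℝ := (Real.sqrt (w ⬝ᵥ w))⁻¹ with hc
    have hcs : c^2 * (w ⬝ᵥ w) = 1 := by
      rw [hc, ← Real.sqrt_inv]
      rw [Real.sq_sqrt (by positivity)]
      field_simp
    have hmem : (B.mulVec (c • w)) ⬝ᵥ (B.mulVec (c • w)) ∈
        {t : ℝ | ∃ v : Fin b → ℝ, v ⬝ᵥ v = 1 ∧ t = B.mulVec v ⬝ᵥ B.mulVec v} := by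
      refine ⟨c • w, ?_, rfl⟩
      rw [smul_dotProduct, dotProduct_smul, smul_eq_mul, smul_eq_mul, ← mul_assoc, ← sq, hcs]
    have hle := le_csSup (opNormSq_bddAbove B) hmem
    have hexp : (B.mulVec (c • w)) ⬝ᵥ (B.mulVec (c • w))
        = c^2 * (B.mulVec w ⬝ᵥ B.mulVec w) := by
      rw [mulVec_smul, smul_dotProduct, dotProduct_smul, smul_eq_mul, smul_eq_mul, ← mul_assoc, ← sq]
    rw [hexp] at hle
    have hc2 : c^2 = (w ⬝ᵥ w)⁻¹ := by
      field_simp at hcs ⊢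
      nlinarith [hcs]
    rw [hc2] at hle
    rw [inv_mul_le_iff₀ hww] at hle
    unfold opNormSq
    linarith [hle]

lemma opNormSq_zero_mulVec {a b : ℕ} {B : Matrix (Fin a) (Fin b) ℝ} (h : opNormSq B = 0) :
    B = 0 := by
  ext k l
  have h1 := mulVec_dp_le B (Pi.single l 1)
  rw [h, zero_mul] at h1
  have h2 : B.mulVec (Pi.single l 1) = 0 :=
    dotProduct_self_eq_zero.mp (le_antisymm h1 (dp_self_nonneg _))
  have h3 := congrFun h2 k
  simpa [mulVec_single] using h3

end opn

section spec

lemma inner_eq_dp {n : ℕ} (x y : EuclideanSpace ℝ (Fin n)) :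
    (inner ℝ x y : ℝ) = ⇑x ⬝ᵥ ⇑y := by
  simp [PiLp.inner_apply, RCLike.inner_apply, dotProduct, mul_comm]

lemma onb_expand {n : ℕ} (U : OrthonormalBasis (Fin n) ℝ (EuclideanSpace ℝ (Fin n)))
    (x z : Fin n → ℝ) :
    x ⬝ᵥ z = ∑ j, (x ⬝ᵥ ⇑(U j)) * (⇑(U j) ⬝ᵥ z) := by
  have h := OrthonormalBasis.sum_inner_mul_inner (𝕜 := ℝ) (E := EuclideanSpace ℝ (Fin n)) U
    (WithLp.toLp 2 x) (WithLp.toLp 2 z)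
  simp only [inner_eq_dp] at h
  simpa using h.symm

lemma psd_sqrt_transpose {k : ℕ} {M : Matrix (Fin k) (Fin k) ℝ} (h : M.PosSemidef) :
    h.sqrtᵀ = h.sqrt := by
  unfold Matrix.PosSemidef.sqrt
  simp [transpose_mul, Matrix.star_eq_conjTranspose, Matrix.mul_assoc]

lemma psd_sqrt_mul_self {k : ℕ} {M : Matrix (Fin k) (Fin k) ℝ} (h : M.PosSemidef) :
    h.sqrt * h.sqrt = M := by
  unfold Matrix.PosSemidef.sqrt
  have hU : (star h.1.eigenvectorUnitary : Matrix (Fin k) (Fin k) ℝ) * h.1.eigenvectorUnitary.1 = 1 :=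
    Matrix.mem_unitaryGroup_iff'.mp h.1.eigenvectorUnitary.2
  calc _ = h.1.eigenvectorUnitary.1 * (diagonal ((↑) ∘ (√·) ∘ h.1.eigenvalues) *
        ((star h.1.eigenvectorUnitary : Matrix (Fin k) (Fin k) ℝ) * h.1.eigenvectorUnitary.1) *
        diagonal ((↑) ∘ (√·) ∘ h.1.eigenvalues)) *
        (star h.1.eigenvectorUnitary : Matrix (Fin k) (Fin k) ℝ) := by
          simp only [Matrix.mul_assoc]
    _ = M := by
      rw [hU, Matrix.mul_one, diagonal_mul_diagonal]
      conv_rhs => rw [h.1.spectral_theorem]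
      congr 3
      ext i
      simp [Real.mul_self_sqrt (h.eigenvalues_nonneg i)]

lemma specKey {n d : ℕ} (B : Matrix (Fin n) (Fin d) ℝ) (y : Fin n → ℝ)
    (hker : ∀ u : Fin n → ℝ, (B * Bᵀ).mulVec u = 0 → y ⬝ᵥ u = 0) :
    sigmaMinSq B * (y ⬝ᵥ y) ≤ y ⬝ᵥ (B * Bᵀ).mulVec y := by
  have hBt : Bᴴ = Bᵀ := by ext i j; simp
  have hC : (B * Bᵀ).PosSemidef := hBt ▸ posSemidef_self_mul_conjTranspose B
  set C := B * Bᵀ with hCdef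
  have hH : C.IsHermitian := hC.1
  set lam := hH.eigenvalues with hlam
  set U := hH.eigenvectorBasis with hU
  set c : Fin n → ℝ := fun j => ⇑(U j) ⬝ᵥ y with hc
  have hsym : Cᵀ = C := herm_transpose hH
  have hyy : y ⬝ᵥ y = ∑ j, (c j)^2 := by
    rw [onb_expand U y y]
    refine Finset.sum_congr rfl fun j _ => ?_
    rw [sq, hc, dotProduct_comm y]
  have hyCy : y ⬝ᵥ C.mulVec y = ∑ j, lam j * (c j)^2 := by
    rw [onb_expand U y (C.mulVec y)]
    refine Finset.sum_congr rfl fun j _ => ?_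
    have h1 : ⇑(U j) ⬝ᵥ C.mulVec y = lam j * c j := by
      rw [dotProduct_mulVec, ← mulVec_transpose, hsym, hH.mulVec_eigenvectorBasis, ← hlam, ← hU]
      simp [hc, smul_dotProduct]
    rw [h1, hc, dotProduct_comm y]
    ring
  have hlam0 : ∀ j, lam j = 0 → c j = 0 := by
    intro j hj
    have h0 : C.mulVec ⇑(U j) = 0 := by
      rw [hH.mulVec_eigenvectorBasis, ← hlam, ← hU, hj]; simp
    have h2 := hker _ h0
    rw [hc]
    simpa [dotProduct_comm] using h2
  have hUnorm : ∀ j, (⇑(U j) : Fin n → ℝ) ⬝ᵥ ⇑(U j) = 1 := by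
    intro j
    have h := real_inner_self_eq_norm_mul_norm (U j)
    rw [U.orthonormal.1 j, one_mul] at h
    rw [← inner_eq_dp]
    exact h
  have hlampos : ∀ j, lam j ≠ 0 → sigmaMinSq B ≤ lam j := by
    intro j hj
    have hpos : 0 < lam j := lt_of_le_of_ne (hC.eigenvalues_nonneg j) (Ne.symm hj)
    set s : ℝ := (Real.sqrt (lam j))⁻¹ with hs
    have hs2 : s^2 = (lam j)⁻¹ := by
      rw [hs, ← Real.sqrt_inv, Real.sq_sqrt (by positivity)]
    have hBtU : Bᵀ.mulVec ⇑(U j) ⬝ᵥ Bᵀ.mulVec ⇑(U j) = lam j := by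
      rw [dotProduct_mulVec, vecMul_transpose, mulVec_mulVec, ← hCdef,
        hH.mulVec_eigenvectorBasis, ← hlam, ← hU]
      simp [smul_dotProduct, hUnorm j]
    have hmem : lam j ∈ {t : ℝ | ∃ v : Fin d → ℝ, (∃ u : Fin n → ℝ, Bᵀ.mulVec u = v) ∧
        v ⬝ᵥ v = 1 ∧ t = B.mulVec v ⬝ᵥ B.mulVec v} := by
      refine ⟨s • Bᵀ.mulVec ⇑(U j), ⟨s • ⇑(U j), by rw [mulVec_smul]⟩, ?_, ?_⟩
      · rw [smul_dotProduct, dotProduct_smul, smul_eq_mul, smul_eq_mul, ← mul_assoc, ← sq,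
          hs2, hBtU, inv_mul_cancel₀ hj]
      · have hBv : B.mulVec (s • Bᵀ.mulVec ⇑(U j)) = (s * lam j) • ⇑(U j) := by
          rw [mulVec_smul, mulVec_mulVec, ← hCdef, hH.mulVec_eigenvectorBasis, ← hlam, ← hU,
            smul_smul]
        rw [hBv, smul_dotProduct, dotProduct_smul, smul_eq_mul, smul_eq_mul, hUnorm j]
        have hss : s^2 * (lam j)^2 = lam j := by
          rw [hs2]; field_simp
        nlinarith [hss]
    have hbdd : BddBelow {t : ℝ | ∃ v : Fin d → ℝ, (∃ u : Fin n → ℝ, Bᵀ.mulVec u = v) ∧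
        v ⬝ᵥ v = 1 ∧ t = B.mulVec v ⬝ᵥ B.mulVec v} := by
      refine ⟨0, ?_⟩
      rintro t ⟨v, _, _, rfl⟩
      exact dp_self_nonneg _
    exact csInf_le hbdd hmem
  rw [hyy, hyCy, Finset.mul_sum]
  refine Finset.sum_le_sum fun j _ => ?_
  rcases eq_or_ne (lam j) 0 with h0 | h0
  · rw [h0, hlam0 j h0]; simp
  · exact mul_le_mul_of_nonneg_right (hlampos j h0) (sq_nonneg _)

end spec


/-- One-step expected contraction of the GRCD method (equation (GRCD_rate)):
`𝔼[‖x^{k+1}−x*‖²_{AᵀA} | x^k] ≤ (1 − σ²_min(A M^{1/2})) ‖x^k−x*‖²_{AᵀA}`. -/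
theorem stmt13 {n d q : ℕ} {ι : Type*} [Fintype ι]
    (A : Matrix (Fin n) (Fin d) ℝ) (b : Fin n → ℝ)
    (xstar : Fin d → ℝ) (hstar : Aᵀ.mulVec (A.mulVec xstar) = Aᵀ.mulVec b)
    (prob : ι → ℝ) (hprob : ∀ i, 0 ≤ prob i) (hsum : ∑ i, prob i = 1)
    (S : ι → Matrix (Fin d) (Fin q) ℝ)
    (hE : (∑ i, prob i • (S i * (S i)ᵀ)).PosDef)
    (hMpsd : (∑ i, (prob i / opNormSq (A * S i)) • (S i * (S i)ᵀ)).PosSemidef)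
    (xk : Fin d → ℝ) :
    let rk := b - A.mulVec xk
    let w : ι → (Fin q → ℝ) := fun i => (S i)ᵀ.mulVec (Aᵀ.mulVec rk)
    let u : ι → (Fin d → ℝ) := fun i => (S i).mulVec (w i)
    let xnext : ι → (Fin d → ℝ) := fun i =>
      xk + ((w i ⬝ᵥ w i) / (A.mulVec (u i) ⬝ᵥ A.mulVec (u i))) • u i
    ∑ i, prob i * (A.mulVec (xnext i - xstar) ⬝ᵥ A.mulVec (xnext i - xstar)) ≤
      (1 - sigmaMinSq (A * hMpsd.sqrt)) *
        (A.mulVec (xk - xstar) ⬝ᵥ A.mulVec (xk - xstar)) := by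
  intro rk w u xnext
  have hrk : rk = b - A.mulVec xk := rfl
  set N : ι → ℝ := fun i => opNormSq (A * S i) with hNdef
  set g : Fin d → ℝ := Aᵀ.mulVec rk with hgdef
  set e : Fin d → ℝ := xk - xstar with hedef
  set y : Fin n → ℝ := A.mulVec e with hydef
  set Mmat : Matrix (Fin d) (Fin d) ℝ := ∑ i, (prob i / opNormSq (A * S i)) • (S i * (S i)ᵀ)
    with hMdef
  set Bm : Matrix (Fin n) (Fin d) ℝ := A * hMpsd.sqrt with hBmdef
  -- basic identities
  have hAty : Aᵀ.mulVec y = -g := by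
    rw [hydef, hedef, mulVec_sub A, mulVec_sub Aᵀ, hstar, hgdef, hrk, mulVec_sub Aᵀ]
    abel
  have hgu : ∀ i, g ⬝ᵥ u i = w i ⬝ᵥ w i := by
    intro i
    rw [show u i = (S i).mulVec (w i) from rfl, dotProduct_mulVec, ← mulVec_transpose]
  have hwz : ∀ i, rk ⬝ᵥ A.mulVec (u i) = w i ⬝ᵥ w i := by
    intro i
    rw [dotProduct_mulVec, ← mulVec_transpose, ← hgdef]
    exact hgu i
  have hyAu : ∀ i, y ⬝ᵥ A.mulVec (u i) = -(w i ⬝ᵥ w i) := by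
    intro i
    rw [dotProduct_mulVec, ← mulVec_transpose, hAty, neg_dotProduct, hgu i]
  -- Step A: exact one-step identity
  have hstep : ∀ i, A.mulVec (xnext i - xstar) ⬝ᵥ A.mulVec (xnext i - xstar)
      = y ⬝ᵥ y - (w i ⬝ᵥ w i)^2 / (A.mulVec (u i) ⬝ᵥ A.mulVec (u i)) := by
    intro i
    set ww := w i ⬝ᵥ w i with hww
    set z := A.mulVec (u i) with hz
    set t : ℝ := ww / (z ⬝ᵥ z) with ht
    have hx : xnext i - xstar = e + t • u i := by
      rw [show xnext i = xk + t • u i from rfl, hedef]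
      abel
    have hexp : A.mulVec (xnext i - xstar) ⬝ᵥ A.mulVec (xnext i - xstar)
        = y ⬝ᵥ y + t * (z ⬝ᵥ y) + (t * (y ⬝ᵥ z) + t * (t * (z ⬝ᵥ z))) := by
      rw [hx, mulVec_add, mulVec_smul, ← hydef, ← hz]
      simp only [add_dotProduct, dotProduct_add, smul_dotProduct, dotProduct_smul, smul_eq_mul]
      ring
    rw [hexp, dotProduct_comm z y, hyAu i, ← hww]
    rcases eq_or_ne (z ⬝ᵥ z) 0 with h0 | h0
    · have hz0 : z = 0 := dotProduct_self_eq_zero.mp h0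
      have hww0 : ww = 0 := by rw [hww, ← hwz i, ← hz, hz0, dotProduct_zero]
      have ht0 : t = 0 := by rw [ht, h0, div_zero]
      rw [ht0, hww0, h0]
      norm_num
    · rw [ht]
      field_simp
      ring
  -- Step B: per-index lower bound of the decrease
  have hB : ∀ i, (w i ⬝ᵥ w i) / N i ≤
      (w i ⬝ᵥ w i)^2 / (A.mulVec (u i) ⬝ᵥ A.mulVec (u i)) := by
    intro i
    set ww := w i ⬝ᵥ w i with hww
    set z := A.mulVec (u i) with hz
    rcases (dp_self_nonneg (w i)).eq_or_lt with h0 | hpos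
    · rw [← hww] at h0
      rw [← h0]
      simp
    · rw [← hww] at hpos
      have hzle : z ⬝ᵥ z ≤ N i * ww := by
        have h1 := mulVec_dp_le (A * S i) (w i)
        rw [← mulVec_mulVec] at h1
        exact h1
      have hzpos : 0 < z ⬝ᵥ z := by
        rcases (dp_self_nonneg z).eq_or_lt with hz0 | h
        · exfalso
          have hz00 : z = 0 := dotProduct_self_eq_zero.mp hz0.symm
          have : ww = 0 := by rw [hww, ← hwz i, ← hz, hz00, dotProduct_zero]
          linarith
        · exact h
      have hNpos : 0 < N i := by nlinarith
      calc ww / N i = ww^2 / (N i * ww) := by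
            rw [sq]; field_simp
        _ ≤ ww^2 / (z ⬝ᵥ z) := by gcongr
  -- Step C: expectation of the decrease equals the quadratic form of Mmat
  have hCsum : ∑ i, prob i * ((w i ⬝ᵥ w i) / N i) = g ⬝ᵥ Mmat.mulVec g := by
    have h1 : Mmat.mulVec g = ∑ i, ((prob i / N i) • (S i * (S i)ᵀ)).mulVec g :=
      sum_mulVec' _ g
    rw [h1, dp_sum g]
    refine Finset.sum_congr rfl fun i _ => ?_
    have hq : g ⬝ᵥ ((prob i / N i) • (S i * (S i)ᵀ)).mulVec g
        = (prob i / N i) * (w i ⬝ᵥ w i) := by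
      rw [smul_mulVec, dotProduct_smul, smul_eq_mul, quad_SST]
    rw [hq, div_mul_eq_mul_div, mul_div_assoc]
  -- Step D: the quadratic form equals y ⬝ (Bm Bmᵀ) y
  have hsqT : hMpsd.sqrtᵀ = hMpsd.sqrt := psd_sqrt_transpose hMpsd
  have hBB : Bm * Bmᵀ = A * Mmat * Aᵀ := by
    rw [hBmdef, transpose_mul, hsqT, ← Matrix.mul_assoc, Matrix.mul_assoc A,
      psd_sqrt_mul_self hMpsd]
  have hD : y ⬝ᵥ (Bm * Bmᵀ).mulVec y = g ⬝ᵥ Mmat.mulVec g := by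
    rw [hBB]
    rw [show (A * Mmat * Aᵀ).mulVec y = A.mulVec (Mmat.mulVec (Aᵀ.mulVec y)) from by
      rw [← mulVec_mulVec, ← mulVec_mulVec]]
    rw [dotProduct_mulVec y A, ← mulVec_transpose, hAty, mulVec_neg, dotProduct_neg,
      neg_dotProduct, neg_neg]
  -- Step E: kernel property for specKey
  have hker : ∀ v : Fin n → ℝ, (Bm * Bmᵀ).mulVec v = 0 → y ⬝ᵥ v = 0 := by
    intro v hv
    set z := Aᵀ.mulVec v with hzdef
    have hzMz : z ⬝ᵥ Mmat.mulVec z = 0 := by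
      have h1 : v ⬝ᵥ (Bm * Bmᵀ).mulVec v = 0 := by rw [hv, dotProduct_zero]
      rw [hBB, ← mulVec_mulVec, ← mulVec_mulVec, dotProduct_mulVec, ← mulVec_transpose] at h1
      exact h1
    -- expand as a sum of nonnegative terms
    have hterm : ∀ i, z ⬝ᵥ ((prob i / N i) • (S i * (S i)ᵀ)).mulVec z
        = (prob i / N i) * ((S i)ᵀ.mulVec z ⬝ᵥ (S i)ᵀ.mulVec z) := by
      intro i
      rw [smul_mulVec, dotProduct_smul, smul_eq_mul, quad_SST]
    have hexp : z ⬝ᵥ Mmat.mulVec z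
        = ∑ i, (prob i / N i) * ((S i)ᵀ.mulVec z ⬝ᵥ (S i)ᵀ.mulVec z) := by
      have h1 : Mmat.mulVec z = ∑ i, ((prob i / N i) • (S i * (S i)ᵀ)).mulVec z :=
        sum_mulVec' _ z
      rw [h1, dp_sum z]
      exact Finset.sum_congr rfl fun i _ => hterm i
    have hzero : ∀ i, (prob i / N i) * ((S i)ᵀ.mulVec z ⬝ᵥ (S i)ᵀ.mulVec z) = 0 := by
      have h2 := hzMz
      rw [hexp] at h2
      intro i
      exact (Finset.sum_eq_zero_iff_of_nonneg (fun i _ =>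
        mul_nonneg (div_nonneg (hprob i) (opNormSq_nonneg' _)) (dp_self_nonneg _))).mp
        h2 i (Finset.mem_univ i)
    -- each i with prob i > 0 has Sᵀ z = 0
    have hSz : ∀ i, prob i * ((S i)ᵀ.mulVec z ⬝ᵥ (S i)ᵀ.mulVec z) = 0 := by
      intro i
      rcases eq_or_ne (prob i) 0 with hp | hp
      · rw [hp, zero_mul]
      have h := hzero i
      rcases mul_eq_zero.mp h with h1 | h1
      · rcases div_eq_zero_iff.mp h1 with h2 | h2
        · exact absurd h2 hp
        · -- N i = 0, so A * S i = 0 and then Sᵀ z = (A S)ᵀ v = 0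
          have hAS : A * S i = 0 := opNormSq_zero_mulVec h2
          have hSzv : (S i)ᵀ.mulVec z = 0 := by
            rw [hzdef, mulVec_mulVec, ← transpose_mul, hAS, transpose_zero, zero_mulVec]
          rw [hSzv, dotProduct_zero, mul_zero]
      · rw [h1, mul_zero]
    have hz0 : z = 0 := by
      by_contra hz0
      have hpos := hE.dotProduct_mulVec_pos hz0
      have hEz : star z ⬝ᵥ (∑ i, prob i • (S i * (S i)ᵀ)).mulVec z = 0 := by
        have h1 : (∑ i, prob i • (S i * (S i)ᵀ)).mulVec z
            = ∑ i, (prob i • (S i * (S i)ᵀ)).mulVec z := sum_mulVec' _ z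
        have hstz : (star z : Fin d → ℝ) = z := by simp
        rw [hstz, h1, dp_sum z]
        refine Finset.sum_eq_zero fun i _ => ?_
        show z ⬝ᵥ (prob i • (S i * (S i)ᵀ)).mulVec z = 0
        rw [smul_mulVec, dotProduct_smul, smul_eq_mul, quad_SST]
        exact hSz i
      rw [hEz] at hpos
      exact lt_irrefl 0 hpos
    rw [hydef, dotProduct_comm, dotProduct_mulVec, ← mulVec_transpose, ← hzdef, hz0,
      zero_dotProduct]
  -- assemble
  have hspec := specKey Bm y hker
  have hsum1 : ∑ i, prob i * (A.mulVec (xnext i - xstar) ⬝ᵥ A.mulVec (xnext i - xstar))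
      = ∑ i, (prob i * (y ⬝ᵥ y)
        - prob i * ((w i ⬝ᵥ w i)^2 / (A.mulVec (u i) ⬝ᵥ A.mulVec (u i)))) := by
    refine Finset.sum_congr rfl fun i _ => ?_
    rw [hstep i, mul_sub]
  rw [hsum1, Finset.sum_sub_distrib, ← Finset.sum_mul, hsum, one_mul]
  have hstep2 : ∑ i, prob i * ((w i ⬝ᵥ w i) / N i)
      ≤ ∑ i, prob i * ((w i ⬝ᵥ w i)^2 / (A.mulVec (u i) ⬝ᵥ A.mulVec (u i))) :=
    Finset.sum_le_sum fun i _ => mul_le_mul_of_nonneg_left (hB i) (hprob i)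
  have hfin : sigmaMinSq Bm * (y ⬝ᵥ y) ≤ ∑ i, prob i * ((w i ⬝ᵥ w i) / N i) := by
    rw [hCsum, ← hD]
    exact hspec
  nlinarith [hstep2, hfin]
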